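/- arXiv:1704.04923 — 2 statements merged into one kernel-verified Lean document; each statement's English description precedes it below -/
import Mathlib

section
/- Let l₁, l₂, l₃, l₄ be four lines in the Euclidean plane in general position (no two parallel, no three concurrent), and let l be their Gauss line. For each i ∈ {1,2,3,4}, assume the four lines obtained from l₁, l₂, l₃, l₄ by replacing l_i with l are again in general position, and let g_i be their Gauss line. Then the five lines l, g₁, g₂, g₃, g₄ all pass through one common point. -/
open EuclideanGeometry RealInnerProductSpace AffineSubspace

noncomputable section

/-- The Euclidean plane. -/
abbrev Pt : Type := EuclideanSpace ℝ (Fin 2)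

/-- The incenter of a triangle `A B C`, given by the standard barycentric formula
with weights the lengths of the opposite sides. -/
def triIncenter (A B C : Pt) : Pt :=
  (dist B C + dist C A + dist A B)⁻¹ •
    (dist B C • A + dist C A • B + dist A B • C)

/-- The inradius of a triangle `A B C`: the distance from the incenter to the
side line `BC`. -/
def triInradius (A B C : Pt) : ℝ :=
  Metric.infDist (triIncenter A B C) (line[ℝ, B, C] : Set Pt)

/-- The centroid of a triangle. -/
def centroid3 (A B C : Pt) : Pt := (3 : ℝ)⁻¹ • (A + B + C)

/-- `F` is the foot of the perpendicular from `P` to the line `XY`. -/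
def IsFoot (F P X Y : Pt) : Prop :=
  F ∈ line[ℝ, X, Y] ∧ inner ℝ (P - F) (Y - X) = (0 : ℝ)

/-- `H` is the orthocenter of the triangle `X Y Z` (it lies on the altitudes from
`X` and from `Y`; for a nondegenerate triangle this determines `H` uniquely). -/
def IsOrthocenter (H X Y Z : Pt) : Prop :=
  inner ℝ (H - X) (Y - Z) = (0 : ℝ) ∧ inner ℝ (H - Y) (Z - X) = (0 : ℝ)

/-- An affine subspace is a (genuine) line. -/
def IsLine (l : AffineSubspace ℝ Pt) : Prop :=
  ∃ p q : Pt, p ≠ q ∧ l = line[ℝ, p, q]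

/-- `Q` is the reflection of `P` across the line through `L₁`, `L₂`:
the midpoint of `P Q` lies on the line and `PQ` is perpendicular to it. -/
def IsReflectionInLine (P Q L₁ L₂ : Pt) : Prop :=
  midpoint ℝ P Q ∈ line[ℝ, L₁, L₂] ∧ inner ℝ (Q - P) (L₂ - L₁) = (0 : ℝ)

/-- `F` is the first Fermat point of triangle `ABC`: erecting equilateral triangles
`BCA''`, `CAB''`, `ABC''` externally on the sides, the lines `AA''`, `BB''`, `CC''`
pass through `F`. -/
def IsFirstFermatPoint (A B C F : Pt) : Prop :=
  ∃ A'' B'' C'' : Pt,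
    dist B A'' = dist B C ∧ dist C A'' = dist B C ∧
      (line[ℝ, B, C] : AffineSubspace ℝ Pt).SOppSide A'' A ∧
    dist C B'' = dist C A ∧ dist A B'' = dist C A ∧
      (line[ℝ, C, A] : AffineSubspace ℝ Pt).SOppSide B'' B ∧
    dist A C'' = dist A B ∧ dist B C'' = dist A B ∧
      (line[ℝ, A, B] : AffineSubspace ℝ Pt).SOppSide C'' C ∧
    F ∈ line[ℝ, A, A''] ∧ F ∈ line[ℝ, B, B''] ∧ F ∈ line[ℝ, C, C'']

/-- `F` is the second Fermat point of triangle `ABC`: the same construction with the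
equilateral triangles erected internally (on the same side as the triangle). -/
def IsSecondFermatPoint (A B C F : Pt) : Prop :=
  ∃ A'' B'' C'' : Pt,
    dist B A'' = dist B C ∧ dist C A'' = dist B C ∧
      (line[ℝ, B, C] : AffineSubspace ℝ Pt).SSameSide A'' A ∧
    dist C B'' = dist C A ∧ dist A B'' = dist C A ∧
      (line[ℝ, C, A] : AffineSubspace ℝ Pt).SSameSide B'' B ∧
    dist A C'' = dist A B ∧ dist B C'' = dist A B ∧
      (line[ℝ, A, B] : AffineSubspace ℝ Pt).SSameSide C'' C ∧
    F ∈ line[ℝ, A, A''] ∧ F ∈ line[ℝ, B, B''] ∧ F ∈ line[ℝ, C, C'']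

/-- `T` is the point where the `A`-excircle of triangle `A B C` touches side `BC`:
there is a circle centered on the opposite side of `BC` from `A`, tangent to the line
`BC` at `T ∈ [B, C]` and tangent to the lines `AB` and `AC`. -/
def IsExcircleTouchPoint (A B C T : Pt) : Prop :=
  ∃ (J : Pt) (r : ℝ), 0 < r ∧
    (line[ℝ, B, C] : AffineSubspace ℝ Pt).SOppSide J A ∧
    T ∈ segment ℝ B C ∧ dist J T = r ∧ inner ℝ (J - T) (C - B) = (0 : ℝ) ∧
    Metric.infDist J (line[ℝ, A, B] : Set Pt) = r ∧
    Metric.infDist J (line[ℝ, A, C] : Set Pt) = r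

/-- `A'` is the center of the equilateral triangle erected on `BC` externally
with respect to `A` (a vertex of the Napoleon triangle). -/
def IsNapoleonVertex (B C A A' : Pt) : Prop :=
  ∃ A'' : Pt, dist B A'' = dist B C ∧ dist C A'' = dist B C ∧
    (line[ℝ, B, C] : AffineSubspace ℝ Pt).SOppSide A'' A ∧
    A' = centroid3 B C A''

/-- The external homothety center of the circles with centers `O₁`, `O₂` and
radii `r₁ ≠ r₂`. -/
def extHomothetyCenter (O₁ O₂ : Pt) (r₁ r₂ : ℝ) : Pt :=
  (r₂ - r₁)⁻¹ • (r₂ • O₁ - r₁ • O₂)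

/-- Four lines in general position (no two parallel, no three concurrent), with the
six pairwise intersection points. -/
def GaussGeneralPosition (l₁ l₂ l₃ l₄ : AffineSubspace ℝ Pt)
    (P₁₂ P₁₃ P₁₄ P₂₃ P₂₄ P₃₄ : Pt) : Prop :=
  IsLine l₁ ∧ IsLine l₂ ∧ IsLine l₃ ∧ IsLine l₄ ∧
  (P₁₂ ∈ l₁ ∧ P₁₂ ∈ l₂ ∧ ∀ Q, Q ∈ l₁ → Q ∈ l₂ → Q = P₁₂) ∧
  (P₁₃ ∈ l₁ ∧ P₁₃ ∈ l₃ ∧ ∀ Q, Q ∈ l₁ → Q ∈ l₃ → Q = P₁₃) ∧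
  (P₁₄ ∈ l₁ ∧ P₁₄ ∈ l₄ ∧ ∀ Q, Q ∈ l₁ → Q ∈ l₄ → Q = P₁₄) ∧
  (P₂₃ ∈ l₂ ∧ P₂₃ ∈ l₃ ∧ ∀ Q, Q ∈ l₂ → Q ∈ l₃ → Q = P₂₃) ∧
  (P₂₄ ∈ l₂ ∧ P₂₄ ∈ l₄ ∧ ∀ Q, Q ∈ l₂ → Q ∈ l₄ → Q = P₂₄) ∧
  (P₃₄ ∈ l₃ ∧ P₃₄ ∈ l₄ ∧ ∀ Q, Q ∈ l₃ → Q ∈ l₄ → Q = P₃₄) ∧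
  P₁₂ ∉ l₃ ∧ P₁₂ ∉ l₄ ∧ P₁₃ ∉ l₄ ∧ P₂₃ ∉ l₄

/-- `g` is the Gauss line of the four lines `l₁, l₂, l₃, l₄` in general position:
the line through the midpoints of the three diagonals of the complete quadrilateral. -/
def IsGaussLine (l₁ l₂ l₃ l₄ g : AffineSubspace ℝ Pt) : Prop :=
  ∃ P₁₂ P₁₃ P₁₄ P₂₃ P₂₄ P₃₄ : Pt,
    GaussGeneralPosition l₁ l₂ l₃ l₄ P₁₂ P₁₃ P₁₄ P₂₃ P₂₄ P₃₄ ∧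
    IsLine g ∧ midpoint ℝ P₁₂ P₃₄ ∈ g ∧ midpoint ℝ P₁₃ P₂₄ ∈ g ∧
      midpoint ℝ P₁₄ P₂₃ ∈ g

/-- `s` is the Steiner line of the four lines `l₁, l₂, l₃, l₄` in general position:
the line through the orthocenters of the four triangles formed by triples of the lines. -/
def IsSteinerLine (l₁ l₂ l₃ l₄ s : AffineSubspace ℝ Pt) : Prop :=
  ∃ P₁₂ P₁₃ P₁₄ P₂₃ P₂₄ P₃₄ H₁₂₃ H₁₂₄ H₁₃₄ H₂₃₄ : Pt,
    GaussGeneralPosition l₁ l₂ l₃ l₄ P₁₂ P₁₃ P₁₄ P₂₃ P₂₄ P₃₄ ∧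
    IsOrthocenter H₁₂₃ P₁₂ P₁₃ P₂₃ ∧ IsOrthocenter H₁₂₄ P₁₂ P₁₄ P₂₄ ∧
    IsOrthocenter H₁₃₄ P₁₃ P₁₄ P₃₄ ∧ IsOrthocenter H₂₃₄ P₂₃ P₂₄ P₃₄ ∧
    IsLine s ∧ H₁₂₃ ∈ s ∧ H₁₂₄ ∈ s ∧ H₁₃₄ ∈ s ∧ H₂₃₄ ∈ s

/-- `e` is the Euler line of the (nondegenerate, non-equilateral) triangle `A B C`:
the line through its circumcenter and its centroid, which are distinct. -/
def IsEulerLine (A B C : Pt) (e : AffineSubspace ℝ Pt) : Prop :=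
  ∃ O : Pt, dist O A = dist O B ∧ dist O B = dist O C ∧ O ≠ centroid3 A B C ∧
    e = line[ℝ, O, centroid3 A B C]

/-- `s` is the Simson line of `P` with respect to triangle `A B C`: a line containing
the feet of the perpendiculars from `P` to the three side lines. -/
def IsSimsonLine (A B C P : Pt) (s : AffineSubspace ℝ Pt) : Prop :=
  IsLine s ∧ ∀ F : Pt, (IsFoot F P B C ∨ IsFoot F P C A ∨ IsFoot F P A B) → F ∈ s


private lemma mem_line_iff {x y p : Pt} :
    p ∈ line[ℝ, x, y] ↔ ∃ t : ℝ, p = t • (y - x) + x := by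
  constructor
  · intro hp
    have h2 : (p - x) +ᵥ x ∈ line[ℝ, x, y] := by
      simpa [vadd_eq_add, sub_add_cancel] using hp
    rw [vadd_left_mem_affineSpan_pair] at h2
    obtain ⟨r, hr⟩ := h2
    refine ⟨r, ?_⟩
    rw [vsub_eq_sub] at hr
    rw [hr]; abel
  · rintro ⟨t, rfl⟩
    simpa [vsub_eq_sub, vadd_eq_add] using smul_vsub_vadd_mem_affineSpan_pair t x y

private lemma line_eq {l : AffineSubspace ℝ Pt} (h : IsLine l) {x y : Pt}
    (hx : x ∈ l) (hy : y ∈ l) (hxy : x ≠ y) : l = line[ℝ, x, y] := by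
  obtain ⟨p, q, hpq, rfl⟩ := h
  have hdir : (line[ℝ, p, q] : AffineSubspace ℝ Pt).direction = ℝ ∙ (p -ᵥ q) := by
    rw [direction_affineSpan, vectorSpan_pair]
  have hxy' : x -ᵥ y ∈ (line[ℝ, p, q] : AffineSubspace ℝ Pt).direction :=
    AffineSubspace.vsub_mem_direction hx hy
  rw [hdir, Submodule.mem_span_singleton] at hxy'
  obtain ⟨r, hr⟩ := hxy'
  have hr0 : r ≠ 0 := by
    rintro rfl
    rw [zero_smul] at hr
    exact hxy (by rwa [eq_comm, vsub_eq_zero_iff_eq] at hr)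
  apply AffineSubspace.ext_of_direction_eq
  · rw [hdir, direction_affineSpan, vectorSpan_pair, ← hr]
    exact (Submodule.span_singleton_smul_eq (IsUnit.mk0 r hr0) _).symm
  · exact ⟨x, hx, left_mem_affineSpan_pair ℝ x y⟩

private lemma solve2 {x0 x1 y0 y1 : ℝ} (h : x0 * y1 = x1 * y0) (hy : ¬ (y0 = 0 ∧ y1 = 0)) :
    ∃ r : ℝ, x0 = r * y0 ∧ x1 = r * y1 := by
  by_cases h0 : y0 = 0
  · have h1 : y1 ≠ 0 := fun h1 => hy ⟨h0, h1⟩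
    subst h0
    have hx0 : x0 = 0 := by
      have h2 := h
      rw [mul_zero] at h2
      exact (mul_eq_zero.mp h2).resolve_right h1
    exact ⟨x1 / y1, by rw [hx0, mul_zero], by field_simp⟩
  · refine ⟨x0 / y0, by field_simp, ?_⟩
    field_simp
    linear_combination -h

private lemma midrep (x y : Pt) : midpoint ℝ x y = (2⁻¹ : ℝ) • x + (2⁻¹ : ℝ) • y := by
  rw [midpoint_eq_smul_add, invOf_eq_inv, smul_add]

private lemma final_step {g : AffineSubspace ℝ Pt} (hg : IsLine g)
    {m1 m2 P U V : Pt} (hm1 : m1 ∈ g) (hm2 : m2 ∈ g)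
    (hsplit : ∀ α β : ℝ, α • U + β • V = 0 → α = 0 ∧ β = 0)
    {x0 x1 y0 y1 : ℝ}
    (hx : P - m1 = x0 • U + x1 • V)
    (hy : m2 - m1 = y0 • U + y1 • V)
    (hcross : x0 * y1 = x1 * y0)
    (hdeg : ¬ (y0 = 0 ∧ y1 = 0)) : P ∈ g := by
  have hne : m1 ≠ m2 := by
    intro h
    apply hdeg
    have h0 : y0 • U + y1 • V = 0 := by rw [← hy, h, sub_self]
    exact hsplit _ _ h0
  rw [line_eq hg hm1 hm2 hne, mem_line_iff]
  obtain ⟨r, hr0, hr1⟩ := solve2 hcross hdeg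
  refine ⟨r, ?_⟩
  have key : P - m1 = r • (m2 - m1) := by
    rw [hx, hy, hr0, hr1, smul_add, smul_smul, smul_smul]
  linear_combination (norm := module) key

set_option maxHeartbeats 20000000 in
/-- **Theorem 11.1 (Gauss lines).** With `l` the Gauss line of `l₁, l₂, l₃, l₄` and
`g_i` the Gauss line of the four lines obtained by replacing `l_i` with `l`:
the lines `l`, `g₁`, `g₂`, `g₃`, `g₄` are concurrent. -/
theorem gauss_lines_concurrent
    (l₁ l₂ l₃ l₄ l g₁ g₂ g₃ g₄ : AffineSubspace ℝ Pt)
    (hl : IsGaussLine l₁ l₂ l₃ l₄ l)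
    (h₁ : IsGaussLine l l₂ l₃ l₄ g₁)
    (h₂ : IsGaussLine l₁ l l₃ l₄ g₂)
    (h₃ : IsGaussLine l₁ l₂ l l₄ g₃)
    (h₄ : IsGaussLine l₁ l₂ l₃ l g₄) :
    ∃ P : Pt, P ∈ l ∧ P ∈ g₁ ∧ P ∈ g₂ ∧ P ∈ g₃ ∧ P ∈ g₄ := by
  obtain ⟨A12, A13, A14, A23, A24, A34,
    ⟨hL1, hL2, hL3, hL4, ⟨h12a, h12b, u12⟩, ⟨h13a, h13b, u13⟩, ⟨h14a, h14b, u14⟩,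
      ⟨h23a, h23b, u23⟩, ⟨h24a, h24b, u24⟩, ⟨h34a, h34b, u34⟩, hn3, hn4, hn134, hn234⟩,
    hLl, hM1l, hM2l, -⟩ := hl
  -- the Gauss line `g₄` of `l₁ l₂ l₃ l`
  obtain ⟨B12, B13, Q1, B23, Q2, Q3,
    ⟨-, -, -, -, ⟨hB12a, hB12b, -⟩, ⟨hB13a, hB13b, -⟩, ⟨hQ1a, hQ1l, uQ1⟩,
      ⟨hB23a, hB23b, -⟩, ⟨hQ2a, hQ2l, uQ2⟩, ⟨hQ3a, hQ3l, uQ3⟩, -, -, -, -⟩,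
    hLg4, hg4m1, hg4m2, hg4m3⟩ := h₄
  have eB12 : A12 = B12 := (u12 _ hB12a hB12b).symm
  subst eB12
  have eB13 : A13 = B13 := (u13 _ hB13a hB13b).symm
  subst eB13
  have eB23 : A23 = B23 := (u23 _ hB23a hB23b).symm
  subst eB23
  -- the Gauss line `g₃` of `l₁ l₂ l l₄`
  obtain ⟨C12, C13, C14, C23, C24, Q4,
    ⟨-, -, -, -, ⟨hC12a, hC12b, -⟩, ⟨hC13a, hC13b, -⟩, ⟨hC14a, hC14b, -⟩,
      ⟨hC23a, hC23b, -⟩, ⟨hC24a, hC24b, -⟩, ⟨hQ4l, hQ4b, uQ4⟩, -, -, -, -⟩,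
    hLg3, hg3m1, hg3m2, hg3m3⟩ := h₃
  have eC12 : A12 = C12 := (u12 _ hC12a hC12b).symm
  subst eC12
  have eC13 : Q1 = C13 := (uQ1 _ hC13a hC13b).symm
  subst eC13
  have eC14 : A14 = C14 := (u14 _ hC14a hC14b).symm
  subst eC14
  have eC23 : Q2 = C23 := (uQ2 _ hC23a hC23b).symm
  subst eC23
  have eC24 : A24 = C24 := (u24 _ hC24a hC24b).symm
  subst eC24
  -- the Gauss line `g₂` of `l₁ l l₃ l₄`
  obtain ⟨D12, D13, D14, D23, D24, D34,
    ⟨-, -, -, -, ⟨hD12a, hD12b, -⟩, ⟨hD13a, hD13b, -⟩, ⟨hD14a, hD14b, -⟩,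
      ⟨hD23a, hD23b, -⟩, ⟨hD24a, hD24b, -⟩, ⟨hD34a, hD34b, -⟩, -, -, -, -⟩,
    hLg2, hg2m1, hg2m2, hg2m3⟩ := h₂
  have eD12 : Q1 = D12 := (uQ1 _ hD12a hD12b).symm
  subst eD12
  have eD13 : A13 = D13 := (u13 _ hD13a hD13b).symm
  subst eD13
  have eD14 : A14 = D14 := (u14 _ hD14a hD14b).symm
  subst eD14
  have eD23 : Q3 = D23 := (uQ3 _ hD23b hD23a).symm
  subst eD23
  have eD24 : Q4 = D24 := (uQ4 _ hD24a hD24b).symm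
  subst eD24
  have eD34 : A34 = D34 := (u34 _ hD34a hD34b).symm
  subst eD34
  -- the Gauss line `g₁` of `l l₂ l₃ l₄`
  obtain ⟨E12, E13, E14, E23, E24, E34,
    ⟨-, -, -, -, ⟨hE12a, hE12b, -⟩, ⟨hE13a, hE13b, -⟩, ⟨hE14a, hE14b, -⟩,
      ⟨hE23a, hE23b, -⟩, ⟨hE24a, hE24b, -⟩, ⟨hE34a, hE34b, -⟩, -, -, -, -⟩,
    hLg1, hg1m1, hg1m2, hg1m3⟩ := h₁
  have eE12 : Q2 = E12 := (uQ2 _ hE12b hE12a).symm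
  subst eE12
  have eE13 : Q3 = E13 := (uQ3 _ hE13b hE13a).symm
  subst eE13
  have eE14 : Q4 = E14 := (uQ4 _ hE14a hE14b).symm
  subst eE14
  have eE23 : A23 = E23 := (u23 _ hE23a hE23b).symm
  subst eE23
  have eE24 : A24 = E24 := (u24 _ hE24a hE24b).symm
  subst eE24
  have eE34 : A34 = E34 := (u34 _ hE34a hE34b).symm
  subst eE34
  -- distinctness of basic points
  have d1213 : A12 ≠ A13 := fun h => hn3 (h ▸ h13b)
  have d1223 : A12 ≠ A23 := fun h => hn3 (h ▸ h23b)
  have d1323 : A13 ≠ A23 := by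
    intro h
    have h2 : A13 ∈ l₂ := h ▸ h23a
    have h3 : A13 = A12 := u12 _ h13a h2
    exact hn3 (h3 ▸ h13b)
  have d1424 : A14 ≠ A24 := by
    intro h
    have h2 : A14 ∈ l₂ := h ▸ h24a
    have h3 : A14 = A12 := u12 _ h14a h2
    exact hn4 (h3 ▸ h14b)
  -- the four lines as spans of pairs of points
  have hl1eq : l₁ = line[ℝ, A12, A13] := line_eq hL1 h12a h13a d1213
  have hl2eq : l₂ = line[ℝ, A12, A23] := line_eq hL2 h12b h23a d1223
  have hl3eq : l₃ = line[ℝ, A13, A23] := line_eq hL3 h13b h23b d1323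
  have hl4eq : l₄ = line[ℝ, A14, A24] := line_eq hL4 h14b h24b d1424
  -- linear independence of the frame
  have hsplit : ∀ α β : ℝ, α • (A13 - A12) + β • (A23 - A12) = 0 → α = 0 ∧ β = 0 := by
    intro α β hαβ
    by_cases hβ : β = 0
    · subst hβ
      rw [zero_smul, add_zero] at hαβ
      have hu : A13 - A12 ≠ 0 := sub_ne_zero.mpr (Ne.symm d1213)
      exact ⟨(smul_eq_zero.mp hαβ).resolve_right hu, rfl⟩
    · exfalso
      have h3 : β • (A23 - A12) = (-α) • (A13 - A12) := by
        linear_combination (norm := module) hαβ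
      have h4 := congrArg (fun w => (β⁻¹ : ℝ) • w) h3
      simp only [smul_smul, inv_mul_cancel₀ hβ, one_smul] at h4
      have h2 : A23 = (β⁻¹ * -α) • (A13 - A12) + A12 := by
        linear_combination (norm := module) h4
      have hA23l1 : A23 ∈ l₁ := by
        rw [hl1eq, mem_line_iff]; exact ⟨_, h2⟩
      have h5 : A23 = A12 := u12 _ hA23l1 h23a
      exact hn3 (h5 ▸ h23b)
  -- parameters of the points
  obtain ⟨a, hA14⟩ : ∃ t : ℝ, A14 = t • (A13 - A12) + A12 := by
    rw [← mem_line_iff, ← hl1eq]; exact h14a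
  obtain ⟨b, hA24⟩ : ∃ t : ℝ, A24 = t • (A23 - A12) + A12 := by
    rw [← mem_line_iff, ← hl2eq]; exact h24a
  obtain ⟨c, hA34⟩ : ∃ t : ℝ, A34 = t • (A23 - A13) + A13 := by
    rw [← mem_line_iff, ← hl3eq]; exact h34a
  obtain ⟨e, hA34e⟩ : ∃ t : ℝ, A34 = t • (A24 - A14) + A14 := by
    rw [← mem_line_iff, ← hl4eq]; exact h34b
  have hA34rep : A34 = (1 - c) • (A13 - A12) + c • (A23 - A12) + A12 := by
    rw [hA34]; module
  -- basic scalar nondegeneracies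
  have hb0 : b ≠ 0 := by
    rintro rfl
    rw [zero_smul, zero_add] at hA24
    exact hn4 (hA24 ▸ h24b)
  have hc0 : c ≠ 0 := by
    rintro rfl
    rw [zero_smul, zero_add] at hA34
    exact hn134 (hA34 ▸ h34b)
  -- Menelaus relation
  have key3 : (a - e * a - (1 - c)) • (A13 - A12) + (e * b - c) • (A23 - A12) = 0 := by
    rw [hA14, hA24] at hA34e
    linear_combination (norm := module) hA34rep - hA34e
  obtain ⟨k1, k2⟩ := hsplit _ _ key3
  have hrel : a * b - a * c - b + b * c = 0 := by linear_combination b * k1 + a * k2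
  -- the Gauss line `l` through the two midpoints
  have hM1M2 : midpoint ℝ A12 A34 ≠ midpoint ℝ A13 A24 := by
    intro h
    have key2 : ((1 - c) / 2 - 1 / 2) • (A13 - A12) + (c / 2 - b / 2) • (A23 - A12) = 0 := by
      rw [midrep, midrep, hA34rep, hA24] at h
      linear_combination (norm := module) h
    obtain ⟨kk1, kk2⟩ := hsplit _ _ key2
    exact hc0 (by linarith)
  have hleq : l = line[ℝ, midpoint ℝ A12 A34, midpoint ℝ A13 A24] :=
    line_eq hLl hM1l hM2l hM1M2
  have hM1rep : midpoint ℝ A12 A34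
      = ((1 - c) / 2) • (A13 - A12) + (c / 2) • (A23 - A12) + A12 := by
    rw [midrep, hA34rep]; module
  have hM2rep : midpoint ℝ A13 A24
      = ((1 : ℝ) / 2) • (A13 - A12) + (b / 2) • (A23 - A12) + A12 := by
    rw [midrep, hA24]; module
  -- parameters of the four points on `l`
  obtain ⟨t1, hQ1t⟩ : ∃ t : ℝ, Q1 = t • (midpoint ℝ A13 A24 - midpoint ℝ A12 A34)
      + midpoint ℝ A12 A34 := by
    rw [← mem_line_iff, ← hleq]; exact hQ1l
  obtain ⟨t2, hQ2t⟩ : ∃ t : ℝ, Q2 = t • (midpoint ℝ A13 A24 - midpoint ℝ A12 A34)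
      + midpoint ℝ A12 A34 := by
    rw [← mem_line_iff, ← hleq]; exact hQ2l
  obtain ⟨t3, hQ3t⟩ : ∃ t : ℝ, Q3 = t • (midpoint ℝ A13 A24 - midpoint ℝ A12 A34)
      + midpoint ℝ A12 A34 := by
    rw [← mem_line_iff, ← hleq]; exact hQ3l
  obtain ⟨t4, hQ4t⟩ : ∃ t : ℝ, Q4 = t • (midpoint ℝ A13 A24 - midpoint ℝ A12 A34)
      + midpoint ℝ A12 A34 := by
    rw [← mem_line_iff, ← hleq]; exact hQ4l
  obtain ⟨s1, hQ1s⟩ : ∃ t : ℝ, Q1 = t • (A13 - A12) + A12 := by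
    rw [← mem_line_iff, ← hl1eq]; exact hQ1a
  obtain ⟨s2, hQ2s⟩ : ∃ t : ℝ, Q2 = t • (A23 - A12) + A12 := by
    rw [← mem_line_iff, ← hl2eq]; exact hQ2a
  obtain ⟨s3, hQ3s⟩ : ∃ t : ℝ, Q3 = t • (A23 - A13) + A13 := by
    rw [← mem_line_iff, ← hl3eq]; exact hQ3a
  obtain ⟨s4, hQ4s⟩ : ∃ t : ℝ, Q4 = t • (A24 - A14) + A14 := by
    rw [← mem_line_iff, ← hl4eq]; exact hQ4b
  have hQ1rep : Q1 = ((1 - c) / 2 + t1 * (c / 2)) • (A13 - A12)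
      + (c / 2 + t1 * ((b - c) / 2)) • (A23 - A12) + A12 := by
    rw [hQ1t, hM1rep, hM2rep]; module
  have hQ2rep : Q2 = ((1 - c) / 2 + t2 * (c / 2)) • (A13 - A12)
      + (c / 2 + t2 * ((b - c) / 2)) • (A23 - A12) + A12 := by
    rw [hQ2t, hM1rep, hM2rep]; module
  have hQ3rep : Q3 = ((1 - c) / 2 + t3 * (c / 2)) • (A13 - A12)
      + (c / 2 + t3 * ((b - c) / 2)) • (A23 - A12) + A12 := by
    rw [hQ3t, hM1rep, hM2rep]; module
  have hQ4rep : Q4 = ((1 - c) / 2 + t4 * (c / 2)) • (A13 - A12)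
      + (c / 2 + t4 * ((b - c) / 2)) • (A23 - A12) + A12 := by
    rw [hQ4t, hM1rep, hM2rep]; module
  -- scalar equations for the parameters
  obtain ⟨EQ1a, EQ1b⟩ := hsplit (s1 - ((1 - c) / 2 + t1 * (c / 2)))
      (0 - (c / 2 + t1 * ((b - c) / 2))) (by linear_combination (norm := module) hQ1rep - hQ1s)
  obtain ⟨EQ2a, EQ2b⟩ := hsplit (0 - ((1 - c) / 2 + t2 * (c / 2)))
      (s2 - (c / 2 + t2 * ((b - c) / 2))) (by linear_combination (norm := module) hQ2rep - hQ2s)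
  obtain ⟨EQ3a, EQ3b⟩ := hsplit (1 - s3 - ((1 - c) / 2 + t3 * (c / 2)))
      (s3 - (c / 2 + t3 * ((b - c) / 2))) (by linear_combination (norm := module) hQ3rep - hQ3s)
  have hQ4s' : Q4 = s4 • (b • (A23 - A12) + A12 - (a • (A13 - A12) + A12))
      + (a • (A13 - A12) + A12) := by rw [← hA14, ← hA24]; exact hQ4s
  obtain ⟨EQ4a, EQ4b⟩ := hsplit (a - s4 * a - ((1 - c) / 2 + t4 * (c / 2)))
      (s4 * b - (c / 2 + t4 * ((b - c) / 2)))
      (by linear_combination (norm := module) hQ4rep - hQ4s')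
  have hbc : b ≠ c := by
    intro h
    rw [h] at EQ1b
    exact hc0 (by linear_combination -2 * EQ1b)
  have hbc' : b - c ≠ 0 := sub_ne_zero.mpr hbc
  have hcb' : c - b ≠ 0 := sub_ne_zero.mpr (Ne.symm hbc)
  -- closed forms for the parameters
  have ht1 : t1 = c / (c - b) := by
    field_simp
    linear_combination 2 * EQ1b
  have ht2 : t2 = (c - 1) / c := by
    field_simp
    linear_combination -2 * EQ2a
  have ht3 : t3 = 1 / b := by
    field_simp
    linear_combination -2 * EQ3a - 2 * EQ3b
  have ht4 : t4 = (2 * a * b - b + b * c - a * c) / b := by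
    field_simp
    linear_combination (-2 * b) * EQ4a + (-2 * a) * EQ4b - t4 * hrel
  have ha_eq : a = b * (1 - c) / (b - c) := by
    field_simp
    linear_combination hrel
  -- the common point: the centroid of Q1, Q2, Q3, Q4 on `l`
  set P₀ : Pt := ((t1 + t2 + t3 + t4) / 4) • (midpoint ℝ A13 A24 - midpoint ℝ A12 A34)
      + midpoint ℝ A12 A34 with hP₀def
  refine ⟨P₀, ?_, ?_, ?_, ?_, ?_⟩
  · rw [hleq, mem_line_iff]
    exact ⟨(t1 + t2 + t3 + t4) / 4, hP₀def⟩
  · have hx : P₀ - midpoint ℝ Q2 A34 =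
        (((1 - c) / 2 + ((t1 + t2 + t3 + t4) / 4) * (c / 2)) - (((1 - c) / 2 + t2 * (c / 2)) + (1 - c)) / 2) • (A13 - A12) + ((c / 2 + ((t1 + t2 + t3 + t4) / 4) * ((b - c) / 2)) - ((c / 2 + t2 * ((b - c) / 2)) + c) / 2) • (A23 - A12) := by
      rw [hP₀def]; simp only [midrep]
      simp only [hQ2rep, hQ3rep, hA34rep, hA24]; module
    have hy : midpoint ℝ Q3 A24 - midpoint ℝ Q2 A34 =
        (((1 - c) / 2 + t3 * (c / 2)) / 2 - (((1 - c) / 2 + t2 * (c / 2)) + (1 - c)) / 2) • (A13 - A12) + (((c / 2 + t3 * ((b - c) / 2)) + b) / 2 - ((c / 2 + t2 * ((b - c) / 2)) + c) / 2) • (A23 - A12) := by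
      simp only [midrep]
      simp only [hQ2rep, hQ3rep, hA34rep, hA24]; module
    have hcross : (((1 - c) / 2 + ((t1 + t2 + t3 + t4) / 4) * (c / 2)) - (((1 - c) / 2 + t2 * (c / 2)) + (1 - c)) / 2) * (((c / 2 + t3 * ((b - c) / 2)) + b) / 2 - ((c / 2 + t2 * ((b - c) / 2)) + c) / 2) = ((c / 2 + ((t1 + t2 + t3 + t4) / 4) * ((b - c) / 2)) - ((c / 2 + t2 * ((b - c) / 2)) + c) / 2) * (((1 - c) / 2 + t3 * (c / 2)) / 2 - (((1 - c) / 2 + t2 * (c / 2)) + (1 - c)) / 2) := by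
      rw [ht1, ht2, ht3, ht4, ha_eq]
      field_simp
      ring
    have hdeg : ¬ ((((1 - c) / 2 + t3 * (c / 2)) / 2 - (((1 - c) / 2 + t2 * (c / 2)) + (1 - c)) / 2) = 0 ∧ (((c / 2 + t3 * ((b - c) / 2)) + b) / 2 - ((c / 2 + t2 * ((b - c) / 2)) + c) / 2) = 0) := by
      rintro ⟨hh0, hh1⟩
      have hz : (t3 - t2 + 2) * (b - c) = 0 := by linear_combination 4 * hh1
      rcases mul_eq_zero.mp hz with hz' | hz'
      · exact one_ne_zero (by linear_combination -2 * hh0 + (c / 2) * hz' : (1:ℝ) = 0)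
      · exact hbc' hz'
    exact final_step hLg1 hg1m1 hg1m2 hsplit hx hy hcross hdeg
  · have hx : P₀ - midpoint ℝ Q1 A34 =
        (((1 - c) / 2 + ((t1 + t2 + t3 + t4) / 4) * (c / 2)) - (((1 - c) / 2 + t1 * (c / 2)) + (1 - c)) / 2) • (A13 - A12) + ((c / 2 + ((t1 + t2 + t3 + t4) / 4) * ((b - c) / 2)) - ((c / 2 + t1 * ((b - c) / 2)) + c) / 2) • (A23 - A12) := by
      rw [hP₀def]; simp only [midrep]
      simp only [hQ1rep, hQ3rep, hA34rep, hA24, hA14]; module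
    have hy : midpoint ℝ A14 Q3 - midpoint ℝ Q1 A34 =
        ((a + ((1 - c) / 2 + t3 * (c / 2))) / 2 - (((1 - c) / 2 + t1 * (c / 2)) + (1 - c)) / 2) • (A13 - A12) + ((c / 2 + t3 * ((b - c) / 2)) / 2 - ((c / 2 + t1 * ((b - c) / 2)) + c) / 2) • (A23 - A12) := by
      simp only [midrep]
      simp only [hQ1rep, hQ3rep, hA34rep, hA24, hA14]; module
    have hcross : (((1 - c) / 2 + ((t1 + t2 + t3 + t4) / 4) * (c / 2)) - (((1 - c) / 2 + t1 * (c / 2)) + (1 - c)) / 2) * ((c / 2 + t3 * ((b - c) / 2)) / 2 - ((c / 2 + t1 * ((b - c) / 2)) + c) / 2) = ((c / 2 + ((t1 + t2 + t3 + t4) / 4) * ((b - c) / 2)) - ((c / 2 + t1 * ((b - c) / 2)) + c) / 2) * ((a + ((1 - c) / 2 + t3 * (c / 2))) / 2 - (((1 - c) / 2 + t1 * (c / 2)) + (1 - c)) / 2) := by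
      rw [ht1, ht2, ht3, ht4, ha_eq]
      field_simp
      ring
    have hdeg : ¬ (((a + ((1 - c) / 2 + t3 * (c / 2))) / 2 - (((1 - c) / 2 + t1 * (c / 2)) + (1 - c)) / 2) = 0 ∧ ((c / 2 + t3 * ((b - c) / 2)) / 2 - ((c / 2 + t1 * ((b - c) / 2)) + c) / 2) = 0) := by
      rintro ⟨hh0, hh1⟩
      exact hc0 (by linear_combination 2 * (b - c) * hh0 - 2 * c * hh1 - hrel)
    exact final_step hLg2 hg2m1 hg2m3 hsplit hx hy hcross hdeg
  · have hx : P₀ - midpoint ℝ Q1 A24 =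
        (((1 - c) / 2 + ((t1 + t2 + t3 + t4) / 4) * (c / 2)) - ((1 - c) / 2 + t1 * (c / 2)) / 2) • (A13 - A12) + ((c / 2 + ((t1 + t2 + t3 + t4) / 4) * ((b - c) / 2)) - ((c / 2 + t1 * ((b - c) / 2)) + b) / 2) • (A23 - A12) := by
      rw [hP₀def]; simp only [midrep]
      simp only [hQ1rep, hQ2rep, hA34rep, hA24, hA14]; module
    have hy : midpoint ℝ A14 Q2 - midpoint ℝ Q1 A24 =
        ((a + ((1 - c) / 2 + t2 * (c / 2))) / 2 - ((1 - c) / 2 + t1 * (c / 2)) / 2) • (A13 - A12) + ((c / 2 + t2 * ((b - c) / 2)) / 2 - ((c / 2 + t1 * ((b - c) / 2)) + b) / 2) • (A23 - A12) := by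
      simp only [midrep]
      simp only [hQ1rep, hQ2rep, hA34rep, hA24, hA14]; module
    have hcross : (((1 - c) / 2 + ((t1 + t2 + t3 + t4) / 4) * (c / 2)) - ((1 - c) / 2 + t1 * (c / 2)) / 2) * ((c / 2 + t2 * ((b - c) / 2)) / 2 - ((c / 2 + t1 * ((b - c) / 2)) + b) / 2) = ((c / 2 + ((t1 + t2 + t3 + t4) / 4) * ((b - c) / 2)) - ((c / 2 + t1 * ((b - c) / 2)) + b) / 2) * ((a + ((1 - c) / 2 + t2 * (c / 2))) / 2 - ((1 - c) / 2 + t1 * (c / 2)) / 2) := by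
      rw [ht1, ht2, ht3, ht4, ha_eq]
      field_simp
      ring
    have hdeg : ¬ (((a + ((1 - c) / 2 + t2 * (c / 2))) / 2 - ((1 - c) / 2 + t1 * (c / 2)) / 2) = 0 ∧ ((c / 2 + t2 * ((b - c) / 2)) / 2 - ((c / 2 + t1 * ((b - c) / 2)) + b) / 2) = 0) := by
      rintro ⟨hh0, hh1⟩
      exact hb0 (by linear_combination 2 * (b - c) * hh0 - 2 * c * hh1 - hrel)
    exact final_step hLg3 hg3m2 hg3m3 hsplit hx hy hcross hdeg
  · have hx : P₀ - midpoint ℝ A12 Q3 =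
        (((1 - c) / 2 + ((t1 + t2 + t3 + t4) / 4) * (c / 2)) - ((1 - c) / 2 + t3 * (c / 2)) / 2) • (A13 - A12) + ((c / 2 + ((t1 + t2 + t3 + t4) / 4) * ((b - c) / 2)) - (c / 2 + t3 * ((b - c) / 2)) / 2) • (A23 - A12) := by
      rw [hP₀def]; simp only [midrep]
      simp only [hQ2rep, hQ3rep, hA34rep, hA24]; module
    have hy : midpoint ℝ A13 Q2 - midpoint ℝ A12 Q3 =
        ((1 + ((1 - c) / 2 + t2 * (c / 2))) / 2 - ((1 - c) / 2 + t3 * (c / 2)) / 2) • (A13 - A12) + ((c / 2 + t2 * ((b - c) / 2)) / 2 - (c / 2 + t3 * ((b - c) / 2)) / 2) • (A23 - A12) := by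
      simp only [midrep]
      simp only [hQ2rep, hQ3rep, hA34rep, hA24]; module
    have hcross : (((1 - c) / 2 + ((t1 + t2 + t3 + t4) / 4) * (c / 2)) - ((1 - c) / 2 + t3 * (c / 2)) / 2) * ((c / 2 + t2 * ((b - c) / 2)) / 2 - (c / 2 + t3 * ((b - c) / 2)) / 2) = ((c / 2 + ((t1 + t2 + t3 + t4) / 4) * ((b - c) / 2)) - (c / 2 + t3 * ((b - c) / 2)) / 2) * ((1 + ((1 - c) / 2 + t2 * (c / 2))) / 2 - ((1 - c) / 2 + t3 * (c / 2)) / 2) := by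
      rw [ht1, ht2, ht3, ht4, ha_eq]
      field_simp
      ring
    have hdeg : ¬ (((1 + ((1 - c) / 2 + t2 * (c / 2))) / 2 - ((1 - c) / 2 + t3 * (c / 2)) / 2) = 0 ∧ ((c / 2 + t2 * ((b - c) / 2)) / 2 - (c / 2 + t3 * ((b - c) / 2)) / 2) = 0) := by
      rintro ⟨hh0, hh1⟩
      have hz : (t2 - t3) * (b - c) = 0 := by linear_combination 4 * hh1
      rcases mul_eq_zero.mp hz with hz' | hz'
      · exact one_ne_zero (by linear_combination 2 * hh0 - (c / 2) * hz' : (1:ℝ) = 0)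
      · exact hbc' hz'
    exact final_step hLg4 hg4m1 hg4m2 hsplit hx hy hcross hdeg
end
end

section
/- Let ABC be a nondegenerate triangle with circumcircle Γ, and let P be a point on Γ (distinct from A, B, C). Suppose the Simson line of P with respect to ABC meets Γ in two distinct points Q and R (both distinct from A, B, C). Let N be the intersection point of the Simson line of Q and the Simson line of R with respect to ABC (assume these two lines meet in a unique point). Then the midpoint of segment PN lies on the line QR (i.e., on the Simson line of P). -/
open EuclideanGeometry RealInnerProductSpace AffineSubspace

noncomputable section

section SimsonAuxC
open Complex
open Complex


/-- Foot of perpendicular from `z` onto the chord through `x`, `y` of the circle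
of radius `√s` centred at the origin. -/
def ftC (s : ℝ) (x y z : ℂ) : ℂ := (x + y + z - x * y * (starRingEnd ℂ) z / (s : ℂ)) / 2

lemma aux_real_param_iff {x y z : ℂ} (hxy : y ≠ x) :
    (∃ t : ℝ, z = x + t • (y - x)) ↔ ((z - x) * (starRingEnd ℂ) (y - x)).im = 0 := by
  constructor
  · rintro ⟨t, rfl⟩
    rw [add_sub_cancel_left, Complex.real_smul, mul_assoc, Complex.mul_conj]
    simp [← Complex.ofReal_mul]
  · intro h
    have hy0 : y - x ≠ 0 := sub_ne_zero.mpr hxy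
    have hw : ((((z - x) * (starRingEnd ℂ) (y - x)).re : ℝ) : ℂ)
        = (z - x) * (starRingEnd ℂ) (y - x) :=
      Complex.conj_eq_iff_re.mp (Complex.conj_eq_iff_im.mpr h)
    refine ⟨((z - x) * (starRingEnd ℂ) (y - x)).re / Complex.normSq (y - x), ?_⟩
    have hns : ((Complex.normSq (y - x) : ℝ) : ℂ) = (y - x) * (starRingEnd ℂ) (y - x) :=
      (Complex.mul_conj _).symm
    have hc0 : (starRingEnd ℂ) (y - x) ≠ 0 := by
      intro h0
      apply hy0
      have := congrArg (starRingEnd ℂ) h0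
      simpa using this
    have hprod : (y - x) * (starRingEnd ℂ) (y - x) ≠ 0 := mul_ne_zero hy0 hc0
    rw [Complex.real_smul]
    push_cast
    rw [hw, hns, ← sub_eq_iff_eq_add', div_mul_eq_mul_div, eq_div_iff hprod]
    ring


lemma aux_ft_mem (s : ℝ) (x y z : ℂ) (hs : (s : ℂ) ≠ 0)
    (hx2 : x * (starRingEnd ℂ) x = (s : ℂ)) (hy2 : y * (starRingEnd ℂ) y = (s : ℂ))
    (hxy : y ≠ x) :
    ∃ t : ℝ, ftC s x y z = x + t • (y - x) := by
  have hinv : (s : ℂ) * (s : ℂ)⁻¹ = 1 := mul_inv_cancel₀ hs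
  rw [aux_real_param_iff hxy, ← Complex.conj_eq_iff_im]
  simp only [ftC, map_mul, map_sub, map_add, map_div₀, Complex.conj_conj,
    Complex.conj_ofReal, map_ofNat]
  linear_combination ((1/2)*z*(starRingEnd ℂ) y*(s:ℂ)⁻¹ + (-1/2)*y*(starRingEnd ℂ) z*(s:ℂ)⁻¹) * hx2 + ((-1/2)*z*(starRingEnd ℂ) x*(s:ℂ)⁻¹ + (1/2)*x*(starRingEnd ℂ) z*(s:ℂ)⁻¹) * hy2 + ((1/2)*z*(starRingEnd ℂ) y + (-1/2)*z*(starRingEnd ℂ) x + (-1/2)*y*(starRingEnd ℂ) z + (1/2)*x*(starRingEnd ℂ) z) * hinv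

lemma aux_ft_perp (s : ℝ) (x y z : ℂ) (hs : (s : ℂ) ≠ 0)
    (hx2 : x * (starRingEnd ℂ) x = (s : ℂ)) (hy2 : y * (starRingEnd ℂ) y = (s : ℂ)) :
    ((starRingEnd ℂ) (z - ftC s x y z) * (y - x)).re = 0 := by
  have hinv : (s : ℂ) * (s : ℂ)⁻¹ = 1 := mul_inv_cancel₀ hs
  have h : (starRingEnd ℂ) (z - ftC s x y z) * (y - x)
      + (starRingEnd ℂ) ((starRingEnd ℂ) (z - ftC s x y z) * (y - x)) = 0 := by
    simp only [ftC, map_mul, map_sub, map_add, map_div₀, Complex.conj_conj,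
      Complex.conj_ofReal, map_ofNat]
    linear_combination (1 + (-1/2)*z*(starRingEnd ℂ) y*(s:ℂ)⁻¹ + (-1/2)*y*(starRingEnd ℂ) z*(s:ℂ)⁻¹) * hx2 + ((-1) + (1/2)*z*(starRingEnd ℂ) x*(s:ℂ)⁻¹ + (1/2)*x*(starRingEnd ℂ) z*(s:ℂ)⁻¹) * hy2 + ((-1/2)*z*(starRingEnd ℂ) y + (1/2)*z*(starRingEnd ℂ) x + (-1/2)*y*(starRingEnd ℂ) z + (1/2)*x*(starRingEnd ℂ) z) * hinv
  rw [Complex.add_conj] at h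
  have h2 := Complex.ofReal_eq_zero.mp h
  linarith

lemma aux_ft_sub (s : ℝ) (a b c p : ℂ) (hs : (s : ℂ) ≠ 0)
    (hp2 : p * (starRingEnd ℂ) p = (s : ℂ)) :
    2 * p * (ftC s a b p - ftC s c a p) = (b - c) * (p - a) := by
  have hinv : (s : ℂ) * (s : ℂ)⁻¹ = 1 := mul_inv_cancel₀ hs
  simp only [ftC]
  linear_combination (a*c*(s:ℂ)⁻¹ - a*b*(s:ℂ)⁻¹) * hp2 + (a*c - a*b) * hinv

lemma aux_simson_iff (s : ℝ) (a b c p z : ℂ)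
    (hs : (s : ℂ) ≠ 0) (ha0 : a ≠ 0) (hb0 : b ≠ 0) (hc0 : c ≠ 0) (hp0 : p ≠ 0)
    (ha2 : a * (starRingEnd ℂ) a = (s : ℂ)) (hb2 : b * (starRingEnd ℂ) b = (s : ℂ))
    (hc2 : c * (starRingEnd ℂ) c = (s : ℂ)) (hp2 : p * (starRingEnd ℂ) p = (s : ℂ))
    (hbc : b ≠ c) (hpa : p ≠ a) :
    ((z - ftC s c a p) * (starRingEnd ℂ) (ftC s a b p - ftC s c a p)).im = 0 ↔
      2 * (s : ℂ) * p ^ 2 * z - 2 * (a * b * c) * p * ((starRingEnd ℂ) z)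
        = (s : ℂ) * (p ^ 3 + (a + b + c) * p ^ 2 - (a * b + b * c + c * a) * p - a * b * c) := by
  have hinv : (s : ℂ) * (s : ℂ)⁻¹ = 1 := mul_inv_cancel₀ hs
  have key : (4 * a * b * c * p ^ 2) *
        ((z - ftC s c a p) * (starRingEnd ℂ) (ftC s a b p - ftC s c a p)
        - (starRingEnd ℂ) ((z - ftC s c a p) * (starRingEnd ℂ) (ftC s a b p - ftC s c a p)))
      = (b - c) * (p - a) *
        (2 * (s : ℂ) * p ^ 2 * z - 2 * (a * b * c) * p * ((starRingEnd ℂ) z)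
          - (s : ℂ) * (p ^ 3 + (a + b + c) * p ^ 2 - (a * b + b * c + c * a) * p - a * b * c)) := by
    simp only [ftC, map_mul, map_sub, map_add, map_div₀, Complex.conj_conj,
      Complex.conj_ofReal, map_ofNat]
    linear_combination (2*b*c*p^3*z*(starRingEnd ℂ) c*(s:ℂ)⁻¹ + (-2)*b*c*p^3*z*(starRingEnd ℂ) b*(s:ℂ)⁻¹ - b*c*p^4*(starRingEnd ℂ) c*(s:ℂ)⁻¹ + b*c*p^4*(starRingEnd ℂ) b*(s:ℂ)⁻¹ - b*c^2*p^2 + b*c^2*p^3*(starRingEnd ℂ) b*(s:ℂ)⁻¹ + b^2*c*p^2 - b^2*c*p^3*(starRingEnd ℂ) c*(s:ℂ)⁻¹ - a*b*c*p^3*(starRingEnd ℂ) c*(s:ℂ)⁻¹ + a*b*c*p^3*(starRingEnd ℂ) b*(s:ℂ)⁻¹ + a*b*c^2*p^2*(starRingEnd ℂ) p*(s:ℂ)⁻¹ - a*b*c^2*p^3*(starRingEnd ℂ) b*(starRingEnd ℂ) p*(s:ℂ)⁻¹^2 - a*b^2*c*p^2*(starRingEnd ℂ) p*(s:ℂ)⁻¹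 + a*b^2*c*p^3*(starRingEnd ℂ) c*(starRingEnd ℂ) p*(s:ℂ)⁻¹^2) * ha2 + ((-2)*c*p^3*z*(s:ℂ)*(s:ℂ)⁻¹ + c*p^4*(s:ℂ)*(s:ℂ)⁻¹ + c^2*p^3*(s:ℂ)*(s:ℂ)⁻¹ + 2*a*c*p^2*z - a*c*p^3 + a*c*p^3*(s:ℂ)*(s:ℂ)⁻¹ - a*c^2*p^2 - a*c^2*p^3*(starRingEnd ℂ) p*(s:ℂ)*(s:ℂ)⁻¹^2 - a^2*c*p^2 + a^2*c^2*p^2*(starRingEnd ℂ) p*(s:ℂ)⁻¹) * hb2 + (2*b*p^3*z*(s:ℂ)*(s:ℂ)⁻¹ - b*p^4*(s:ℂ)*(s:ℂ)⁻¹ - b^2*p^3*(s:ℂ)*(s:ℂ)⁻¹ + (-2)*a*b*p^2*z + a*b*p^3 - a*b*p^3*(s:ℂ)*(s:ℂ)⁻¹ + a*b^2*p^2 + a*b^2*p^3*(starRingEnd ℂ) p*(s:ℂ)*(s:ℂ)⁻¹^2 + a^2*b*p^2 - a^2*b^2*p^2*(starRingEnd ℂ) p*(s:ℂ)⁻¹)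 * hc2 + (-a*c^2*p^2*(s:ℂ)^2*(s:ℂ)⁻¹^2 - a*b*c^2*p + a*b*c^2*p*(s:ℂ)*(s:ℂ)⁻¹ + a*b^2*p^2*(s:ℂ)^2*(s:ℂ)⁻¹^2 + a*b^2*c*p - a*b^2*c*p*(s:ℂ)*(s:ℂ)⁻¹ + a^2*c^2*p*(s:ℂ)*(s:ℂ)⁻¹ + a^2*b*c^2*(s:ℂ)*(s:ℂ)⁻¹ + (-2)*a^2*b*c^2*p*(starRingEnd ℂ) z*(s:ℂ)⁻¹ + a^2*b*c^2*p*(starRingEnd ℂ) p*(s:ℂ)⁻¹ - a^2*b^2*p*(s:ℂ)*(s:ℂ)⁻¹ - a^2*b^2*c*(s:ℂ)*(s:ℂ)⁻¹ + 2*a^2*b^2*c*p*(starRingEnd ℂ) z*(s:ℂ)⁻¹ - a^2*b^2*c*p*(starRingEnd ℂ) p*(s:ℂ)⁻¹) * hp2 + ((-2)*c*p^3*z*(s:ℂ) + c*p^4*(s:ℂ) + c^2*p^3*(s:ℂ) + 2*b*p^3*z*(s:ℂ) - b*p^4*(s:ℂ) - b^2*p^3*(s:ℂ) + a*c*p^3*(s:ℂ)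 - a*c^2*p^2*(s:ℂ) - a*c^2*p^2*(s:ℂ)^2*(s:ℂ)⁻¹ - a*b*p^3*(s:ℂ) + a*b*c^2*p*(s:ℂ) + a*b^2*p^2*(s:ℂ) + a*b^2*p^2*(s:ℂ)^2*(s:ℂ)⁻¹ - a*b^2*c*p*(s:ℂ) + a^2*c^2*p*(s:ℂ) + a^2*b*c^2*(s:ℂ) + (-2)*a^2*b*c^2*p*(starRingEnd ℂ) z - a^2*b^2*p*(s:ℂ) - a^2*b^2*c*(s:ℂ) + 2*a^2*b^2*c*p*(starRingEnd ℂ) z) * hinv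
  have h4 : (4 * a * b * c * p ^ 2 : ℂ) ≠ 0 := by
    refine mul_ne_zero (mul_ne_zero (mul_ne_zero (mul_ne_zero ?_ ha0) hb0) hc0) (pow_ne_zero _ hp0)
    norm_num
  have hbcpa : ((b - c) * (p - a) : ℂ) ≠ 0 :=
    mul_ne_zero (sub_ne_zero.mpr hbc) (sub_ne_zero.mpr hpa)
  constructor
  · intro h
    have h0 : (z - ftC s c a p) * (starRingEnd ℂ) (ftC s a b p - ftC s c a p)
        - (starRingEnd ℂ) ((z - ftC s c a p) * (starRingEnd ℂ) (ftC s a b p - ftC s c a p)) = 0 := by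
      rw [Complex.sub_conj, h]
      simp
    rw [h0, mul_zero] at key
    have h1 := (mul_eq_zero.mp key.symm).resolve_left hbcpa
    linear_combination h1
  · intro h
    have h1 : (b - c) * (p - a) *
        (2 * (s : ℂ) * p ^ 2 * z - 2 * (a * b * c) * p * ((starRingEnd ℂ) z)
          - (s : ℂ) * (p ^ 3 + (a + b + c) * p ^ 2 - (a * b + b * c + c * a) * p - a * b * c)) = 0 := by
      linear_combination ((b - c) * (p - a)) * h
    rw [h1] at key
    have h2 := (mul_eq_zero.mp key).resolve_left h4
    rw [← Complex.conj_eq_iff_im]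
    linear_combination -h2

lemma aux_core (s : ℝ) (a b c p q r n : ℂ)
    (hs : (s : ℂ) ≠ 0) (hp0 : p ≠ 0) (hq0 : q ≠ 0) (hr0 : r ≠ 0)
    (hqr : q ≠ r)
    (hpP : p * (starRingEnd ℂ) p = (s : ℂ))
    (hqQ : q * (starRingEnd ℂ) q = (s : ℂ))
    (hrR : r * (starRingEnd ℂ) r = (s : ℂ))
    (H1 : 2 * (s : ℂ) * p ^ 2 * q - 2 * (a * b * c) * p * ((starRingEnd ℂ) q)
        = (s : ℂ) * (p ^ 3 + (a + b + c) * p ^ 2 - (a * b + b * c + c * a) * p - a * b * c))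
    (H2 : 2 * (s : ℂ) * p ^ 2 * r - 2 * (a * b * c) * p * ((starRingEnd ℂ) r)
        = (s : ℂ) * (p ^ 3 + (a + b + c) * p ^ 2 - (a * b + b * c + c * a) * p - a * b * c))
    (H3 : 2 * (s : ℂ) * q ^ 2 * n - 2 * (a * b * c) * q * ((starRingEnd ℂ) n)
        = (s : ℂ) * (q ^ 3 + (a + b + c) * q ^ 2 - (a * b + b * c + c * a) * q - a * b * c))
    (H4 : 2 * (s : ℂ) * r ^ 2 * n - 2 * (a * b * c) * r * ((starRingEnd ℂ) n)
        = (s : ℂ) * (r ^ 3 + (a + b + c) * r ^ 2 - (a * b + b * c + c * a) * r - a * b * c)) :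
    2 * (s : ℂ) * p ^ 2 * ((p + n) / 2) - 2 * (a * b * c) * p * ((starRingEnd ℂ) ((p + n) / 2))
      = (s : ℂ) * (p ^ 3 + (a + b + c) * p ^ 2 - (a * b + b * c + c * a) * p - a * b * c) := by
  have e1 : p * q * r + a * b * c = 0 := by
    have h5 : (2 * (s : ℂ) * p * (q - r)) * (p * q * r + a * b * c) = 0 := by
      linear_combination q * r * H1 - q * r * H2 + 2 * (a * b * c) * p * r * hqQ
        - 2 * (a * b * c) * p * q * hrR
    exact (mul_eq_zero.mp h5).resolve_left
      (mul_ne_zero (mul_ne_zero (mul_ne_zero two_ne_zero hs) hp0) (sub_ne_zero.mpr hqr))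
  have E2 : 2 * (s : ℂ) * p ^ 2 * (q + r)
      = (s : ℂ) * (p ^ 3 + (a + b + c) * p ^ 2 - (a * b + b * c + c * a) * p - a * b * c) := by
    linear_combination H1 + 2 * p * ((starRingEnd ℂ) q) * e1 - 2 * p ^ 2 * r * hqQ
  have E3' : 2 * (s : ℂ) * n * (q + r) - 2 * (a * b * c) * ((starRingEnd ℂ) n)
      = (s : ℂ) * (q ^ 2 + q * r + r ^ 2 + (a + b + c) * (q + r) - (a * b + b * c + c * a)) := by
    have h : (q - r) * ((2 * (s : ℂ) * n * (q + r) - 2 * (a * b * c) * ((starRingEnd ℂ) n))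
        - (s : ℂ) * (q ^ 2 + q * r + r ^ 2 + (a + b + c) * (q + r) - (a * b + b * c + c * a))) = 0 := by
      linear_combination H3 - H4
    have h2 := (mul_eq_zero.mp h).resolve_left (sub_ne_zero.mpr hqr)
    linear_combination h2
  have E3 : 2 * n = q + r + (a + b + c) - p := by
    have h : ((s : ℂ) * q * r) * (2 * n - (q + r + (a + b + c) - p)) = 0 := by
      linear_combination q * E3' - H3 + (s : ℂ) * e1
    have h2 := (mul_eq_zero.mp h).resolve_left (mul_ne_zero (mul_ne_zero hs hq0) hr0)
    linear_combination h2
  have hc : (starRingEnd ℂ) ((p + n) / 2) = ((starRingEnd ℂ) p + (starRingEnd ℂ) n) / 2 := by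
    simp [map_add, map_div₀, map_ofNat]
  rw [hc]
  have hfin : (2 * q) * ((2 * (s : ℂ) * p ^ 2 * ((p + n) / 2)
      - 2 * (a * b * c) * p * (((starRingEnd ℂ) p + (starRingEnd ℂ) n) / 2))
      - (s : ℂ) * (p ^ 3 + (a + b + c) * p ^ 2 - (a * b + b * c + c * a) * p - a * b * c)) = 0 := by
    linear_combination p * H3 + (s : ℂ) * p * q * (p - q) * E3 - 2 * p * q * ((starRingEnd ℂ) p) * e1
      + 2 * p * q ^ 2 * r * hpP + q * E2 + (s : ℂ) * (q - p) * e1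
  have h2 := (mul_eq_zero.mp hfin).resolve_left (mul_ne_zero two_ne_zero hq0)
  linear_combination h2

end SimsonAuxC

section SimsonGlue

open Complex

/-- Characterisation of membership in a line through two points of the plane,
via a complex-coordinates chart. -/
lemma aux_mem_line_iff (φ : Pt ≃ₗᵢ[ℝ] ℂ) {x y : Pt} (z : Pt) (hxy : φ y ≠ φ x) :
    z ∈ line[ℝ, x, y] ↔ ((φ z - φ x) * (starRingEnd ℂ) (φ y - φ x)).im = 0 := by
  rw [← AffineSubspace.vsub_right_mem_direction_iff_mem
    (left_mem_affineSpan_pair ℝ x y) z, direction_affineSpan, mem_vectorSpan_pair_rev,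
    ← aux_real_param_iff hxy]
  constructor
  · rintro ⟨t, ht⟩
    refine ⟨t, ?_⟩
    have hz : z = t • (y - x) + x := by
      have h' := ht
      rw [vsub_eq_sub, vsub_eq_sub] at h'
      rw [h', sub_add_cancel]
    rw [hz]
    simp only [map_add, map_smul, map_sub]
    module
  · rintro ⟨t, ht⟩
    refine ⟨t, ?_⟩
    rw [vsub_eq_sub, vsub_eq_sub]
    apply φ.injective
    simp only [map_smul, map_sub]
    rw [ht]
    module

lemma aux_line_eq {l : AffineSubspace ℝ Pt} (hl : IsLine l) {x y : Pt}
    (hx : x ∈ l) (hy : y ∈ l) (hxy : x ≠ y) : l = line[ℝ, x, y] := by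
  obtain ⟨u, v, huv, rfl⟩ := hl
  have hle : line[ℝ, x, y] ≤ line[ℝ, u, v] := by
    rw [affineSpan_le]
    rintro w (rfl | rfl)
    · exact hx
    · exact hy
  have h1 : Module.finrank ℝ (line[ℝ, x, y]).direction = 1 := by
    rw [direction_affineSpan, vectorSpan_pair]
    exact finrank_span_singleton (vsub_ne_zero.mpr hxy)
  have h2 : Module.finrank ℝ (line[ℝ, u, v]).direction = 1 := by
    rw [direction_affineSpan, vectorSpan_pair]
    exact finrank_span_singleton (vsub_ne_zero.mpr huv)
  have hde : (line[ℝ, x, y]).direction = (line[ℝ, u, v]).direction :=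
    Submodule.eq_of_le_of_finrank_le (AffineSubspace.direction_le hle) (by rw [h1, h2])
  exact ((AffineSubspace.eq_iff_direction_eq_of_mem
    (left_mem_affineSpan_pair ℝ x y) hx).mpr hde).symm

/-- The point `φ.symm (ftC s x y z + o)` is the foot of the perpendicular from `Z`
to the line `X Y`. -/
lemma aux_isFoot (φ : Pt ≃ₗᵢ[ℝ] ℂ) (s : ℝ) (o : ℂ) {X Y Z : Pt} (hs : (s : ℂ) ≠ 0)
    (hx2 : (φ X - o) * (starRingEnd ℂ) (φ X - o) = (s : ℂ))
    (hy2 : (φ Y - o) * (starRingEnd ℂ) (φ Y - o) = (s : ℂ))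
    (hxy : φ Y ≠ φ X) :
    IsFoot (φ.symm (ftC s (φ X - o) (φ Y - o) (φ Z - o) + o)) Z X Y := by
  have hxy' : φ Y - o ≠ φ X - o := fun h => hxy (by linear_combination (norm := module) h)
  have hF : φ (φ.symm (ftC s (φ X - o) (φ Y - o) (φ Z - o) + o))
      = ftC s (φ X - o) (φ Y - o) (φ Z - o) + o := φ.apply_symm_apply _
  constructor
  · rw [aux_mem_line_iff φ _ hxy, hF]
    have h1 : ftC s (φ X - o) (φ Y - o) (φ Z - o) + o - φ X
        = ftC s (φ X - o) (φ Y - o) (φ Z - o) - (φ X - o) := by ring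
    have h2 : φ Y - φ X = (φ Y - o) - (φ X - o) := by ring
    rw [h1, h2]
    exact (aux_real_param_iff hxy').mp (aux_ft_mem s _ _ _ hs hx2 hy2 hxy')
  · rw [inner_map_complex φ]
    have e1 : φ (Z - φ.symm (ftC s (φ X - o) (φ Y - o) (φ Z - o) + o))
        = (φ Z - o) - ftC s (φ X - o) (φ Y - o) (φ Z - o) := by
      rw [map_sub, hF]; ring
    have e2 : φ (Y - X) = (φ Y - o) - (φ X - o) := by
      rw [map_sub]; ring
    rw [e1, e2]
    rw [mul_comm]
    exact aux_ft_perp s _ _ _ hs hx2 hy2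

end SimsonGlue

/-- **Theorem 11.4 (Simson lines).** Let the Simson line of `P` with respect to `ABC`
meet the circumcircle at `Q`, `R`, and let `N` be the intersection of the Simson
lines of `Q` and `R`. Then the midpoint of `PN` lies on the Simson line of `P`. -/
theorem simson_lines_midpoint
    (A B C P Q R N O : Pt) (rad : ℝ)
    (sP sQ sR : AffineSubspace ℝ Pt)
    (hABC : ¬ Collinear ℝ ({A, B, C} : Set Pt))
    (hO : dist O A = rad ∧ dist O B = rad ∧ dist O C = rad)
    (hP : dist O P = rad) (hPA : P ≠ A) (hPB : P ≠ B) (hPC : P ≠ C)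
    (hsP : IsSimsonLine A B C P sP)
    (hQ : dist O Q = rad) (hQmem : Q ∈ sP)
    (hR : dist O R = rad) (hRmem : R ∈ sP)
    (hQR : Q ≠ R)
    (hQA : Q ≠ A) (hQB : Q ≠ B) (hQC : Q ≠ C)
    (hRA : R ≠ A) (hRB : R ≠ B) (hRC : R ≠ C)
    (hsQ : IsSimsonLine A B C Q sQ)
    (hsR : IsSimsonLine A B C R sR)
    (hN : N ∈ sQ ∧ N ∈ sR)
    (hNuniq : ∀ Z : Pt, Z ∈ sQ → Z ∈ sR → Z = N) :
    midpoint ℝ P N ∈ sP := by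
  obtain ⟨hOA, hOB, hOC⟩ := hO
  obtain ⟨hNQ, hNR⟩ := hN
  -- pairwise distinctness of A, B, C
  have hAB : A ≠ B := fun h => hABC (by
    have h2 : ({A, B, C} : Set Pt) = {A, C} := by rw [← h]; ext z; simp <;> tauto
    rw [h2]; exact collinear_pair ℝ A C)
  have hBC : B ≠ C := fun h => hABC (by
    have h2 : ({A, B, C} : Set Pt) = {A, B} := by rw [← h]; ext z; simp <;> tauto
    rw [h2]; exact collinear_pair ℝ A B)
  have hAC : A ≠ C := fun h => hABC (by
    have h2 : ({A, B, C} : Set Pt) = {A, B} := by rw [← h]; ext z; simp <;> tauto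
    rw [h2]; exact collinear_pair ℝ A B)
  -- the radius is nonzero
  have hrad : rad ≠ 0 := by
    intro h
    apply hAB
    have h1 : dist O A = 0 := by rw [hOA, h]
    have h2 : dist O B = 0 := by rw [hOB, h]
    rw [dist_eq_zero] at h1 h2
    rw [← h1, h2]
  set s : ℝ := rad ^ 2 with hs_def
  have hs : (s : ℂ) ≠ 0 := by
    rw [Complex.ofReal_ne_zero, hs_def]
    exact pow_ne_zero _ hrad
  set φ : Pt ≃ₗᵢ[ℝ] ℂ := Complex.orthonormalBasisOneI.repr.symm with hφ_def
  set o : ℂ := φ O with ho_def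
  have circ : ∀ X : Pt, dist O X = rad →
      (φ X - o) * (starRingEnd ℂ) (φ X - o) = (s : ℂ) := by
    intro X hX
    rw [Complex.mul_conj]
    norm_cast
    rw [← Complex.sq_norm, ← Complex.dist_eq, ho_def, φ.dist_map, dist_comm, hX, hs_def]
  set a : ℂ := φ A - o with ha_def
  set b : ℂ := φ B - o with hb_def
  set c : ℂ := φ C - o with hc_def
  set p : ℂ := φ P - o with hp_def
  set q : ℂ := φ Q - o with hq_def
  set r : ℂ := φ R - o with hr_def
  set n : ℂ := φ N - o with hn_def
  have ha2 : a * (starRingEnd ℂ) a = (s : ℂ) := circ A hOA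
  have hb2 : b * (starRingEnd ℂ) b = (s : ℂ) := circ B hOB
  have hc2 : c * (starRingEnd ℂ) c = (s : ℂ) := circ C hOC
  have hp2 : p * (starRingEnd ℂ) p = (s : ℂ) := circ P hP
  have hq2 : q * (starRingEnd ℂ) q = (s : ℂ) := circ Q hQ
  have hr2 : r * (starRingEnd ℂ) r = (s : ℂ) := circ R hR
  have nz : ∀ x : ℂ, x * (starRingEnd ℂ) x = (s : ℂ) → x ≠ 0 := by
    intro x hx h0
    apply hs
    rw [← hx, h0, zero_mul]
  have ha0 := nz a ha2
  have hb0 := nz b hb2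
  have hc0 := nz c hc2
  have hp0 := nz p hp2
  have hq0 := nz q hq2
  have hr0 := nz r hr2
  -- centered distinctness
  have cdist : ∀ {X Y : Pt}, X ≠ Y → φ X - o ≠ φ Y - o := by
    intro X Y hXY h
    exact hXY (φ.injective (by linear_combination h))
  have hbc' : b ≠ c := cdist hBC
  have hpa' : p ≠ a := cdist hPA
  have hqa' : q ≠ a := cdist hQA
  have hra' : r ≠ a := cdist hRA
  have hqr' : q ≠ r := cdist hQR
  have hφAC : φ A ≠ φ C := fun h => hAC (φ.injective h)
  -- feet of the perpendiculars
  have hF1 : IsFoot (φ.symm (ftC s c a p + o)) P C A :=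
    aux_isFoot φ s o hs hc2 ha2 hφAC
  have hF2 : IsFoot (φ.symm (ftC s a b p + o)) P A B :=
    aux_isFoot φ s o hs ha2 hb2 (fun h => hAB.symm (φ.injective h))
  have hG1 : IsFoot (φ.symm (ftC s c a q + o)) Q C A :=
    aux_isFoot φ s o hs hc2 ha2 hφAC
  have hG2 : IsFoot (φ.symm (ftC s a b q + o)) Q A B :=
    aux_isFoot φ s o hs ha2 hb2 (fun h => hAB.symm (φ.injective h))
  have hK1 : IsFoot (φ.symm (ftC s c a r + o)) R C A :=
    aux_isFoot φ s o hs hc2 ha2 hφAC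
  have hK2 : IsFoot (φ.symm (ftC s a b r + o)) R A B :=
    aux_isFoot φ s o hs ha2 hb2 (fun h => hAB.symm (φ.injective h))
  -- distinctness of the two feet, for each of P, Q, R
  have ftne : ∀ z : ℂ, z * (starRingEnd ℂ) z = (s : ℂ) → z ≠ a → ftC s a b z ≠ ftC s c a z := by
    intro z hz2 hza h
    have hsub := aux_ft_sub s a b c z hs hz2
    rw [h, sub_self, mul_zero] at hsub
    rcases mul_eq_zero.mp hsub.symm with h1 | h1
    · exact hbc' (sub_eq_zero.mp h1)
    · exact hza (sub_eq_zero.mp h1)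
  have symmne : ∀ z w : ℂ, z ≠ w → φ.symm (z + o) ≠ φ.symm (w + o) := by
    intro z w hzw h
    exact hzw (by linear_combination φ.symm.injective h)
  -- the three Simson lines, identified
  have hsPeq : sP = line[ℝ, φ.symm (ftC s c a p + o), φ.symm (ftC s a b p + o)] :=
    aux_line_eq hsP.1 (hsP.2 _ (Or.inr (Or.inl hF1))) (hsP.2 _ (Or.inr (Or.inr hF2)))
      (symmne _ _ (ftne p hp2 hpa').symm).symm.symm
  have hsQeq : sQ = line[ℝ, φ.symm (ftC s c a q + o), φ.symm (ftC s a b q + o)] :=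
    aux_line_eq hsQ.1 (hsQ.2 _ (Or.inr (Or.inl hG1))) (hsQ.2 _ (Or.inr (Or.inr hG2)))
      (symmne _ _ (ftne q hq2 hqa').symm).symm.symm
  have hsReq : sR = line[ℝ, φ.symm (ftC s c a r + o), φ.symm (ftC s a b r + o)] :=
    aux_line_eq hsR.1 (hsR.2 _ (Or.inr (Or.inl hK1))) (hsR.2 _ (Or.inr (Or.inr hK2)))
      (symmne _ _ (ftne r hr2 hra').symm).symm.symm
  -- transfer the membership hypotheses to complex coordinates
  have hφs : ∀ z : ℂ, φ (φ.symm (z + o)) = z + o := fun z => φ.apply_symm_apply _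
  have keydir : ∀ x : ℂ, φ (φ.symm (ftC s a b x + o)) - φ (φ.symm (ftC s c a x + o))
      = ftC s a b x - ftC s c a x := by
    intro x
    rw [hφs, hφs]
    ring
  have keyne : ∀ x : ℂ, x * (starRingEnd ℂ) x = (s : ℂ) → x ≠ a →
      φ (φ.symm (ftC s a b x + o)) ≠ φ (φ.symm (ftC s c a x + o)) := by
    intro x hx2 hxa h
    rw [hφs, hφs] at h
    exact ftne x hx2 hxa (by linear_combination h)
  have memtr : ∀ (Z : Pt) (x : ℂ), x * (starRingEnd ℂ) x = (s : ℂ) → x ≠ a →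
      Z ∈ line[ℝ, φ.symm (ftC s c a x + o), φ.symm (ftC s a b x + o)] →
      ((φ Z - o - ftC s c a x) * (starRingEnd ℂ) (ftC s a b x - ftC s c a x)).im = 0 := by
    intro Z x hx2 hxa hmem
    have h1 := (aux_mem_line_iff φ Z (keyne x hx2 hxa)).mp hmem
    rw [keydir, hφs] at h1
    have h2 : φ Z - (ftC s c a x + o) = φ Z - o - ftC s c a x := by ring
    rwa [h2] at h1
  have H1 := (aux_simson_iff s a b c p q hs ha0 hb0 hc0 hp0 ha2 hb2 hc2 hp2 hbc' hpa').mp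
    (memtr Q p hp2 hpa' (hsPeq ▸ hQmem))
  have H2 := (aux_simson_iff s a b c p r hs ha0 hb0 hc0 hp0 ha2 hb2 hc2 hp2 hbc' hpa').mp
    (memtr R p hp2 hpa' (hsPeq ▸ hRmem))
  have H3 := (aux_simson_iff s a b c q n hs ha0 hb0 hc0 hq0 ha2 hb2 hc2 hq2 hbc' hqa').mp
    (memtr N q hq2 hqa' (hsQeq ▸ hNQ))
  have H4 := (aux_simson_iff s a b c r n hs ha0 hb0 hc0 hr0 ha2 hb2 hc2 hr2 hbc' hra').mp
    (memtr N r hr2 hra' (hsReq ▸ hNR))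
  -- conclude via the core computation
  rw [hsPeq, aux_mem_line_iff φ _ (keyne p hp2 hpa')]
  have hmid : φ (midpoint ℝ P N) = (φ P + φ N) / 2 := by
    rw [show midpoint ℝ P N = (2⁻¹ : ℝ) • (P + N) by rw [midpoint_eq_smul_add, invOf_eq_inv],
      map_smul, map_add, Complex.real_smul]
    push_cast
    ring
  have h5 : φ (midpoint ℝ P N) - φ (φ.symm (ftC s c a p + o))
      = (p + n) / 2 - ftC s c a p := by
    rw [hmid, hφs, hp_def, hn_def]
    ring
  rw [keydir, h5]
  rw [aux_simson_iff s a b c p ((p + n) / 2) hs ha0 hb0 hc0 hp0 ha2 hb2 hc2 hp2 hbc' hpa']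
  exact aux_core s a b c p q r n hs hp0 hq0 hr0 hqr' hp2 hq2 hr2 H1 H2 H3 H4
end
end
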